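/- The cross-ratio datum T = ((1,2,3,5),(1,2,4,6),(1,2,7,8),(3,4,5,6),(3,4,7,8)) on 8 points has cross-ratio degree exactly 4: there exists a nonzero polynomial q ∈ ℂ[x₁,…,x₅] such that for every (a₁,…,a₅) ∈ (ℂ∖{0,1})⁵ with q(a₁,…,a₅) ≠ 0, the set of tuples (p₁,…,p₈) of pairwise distinct points of ℙ¹(ℂ) with p₁ = ∞, p₂ = 0, p₃ = 1 satisfying CR(p₁,p₂,p₃,p₅)=a₁, CR(p₁,p₂,p₄,p₆)=a₂, CR(p₁,p₂,p₇,p₈)=a₃, CR(p₃,p₄,p₅,p₆)=a₄, CR(p₃,p₄,p₇,p₈)=a₅ has exactly 4 elements. -/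

import Mathlib

open OnePoint

/-- Cross-ratio of four points of `ℙ¹(ℂ) = OnePoint ℂ`:
`CR(z₁,z₂,z₃,z₄) = ((z₃−z₁)(z₄−z₂))/((z₃−z₂)(z₄−z₁))` when all points are finite,
extended to one point at infinity by omitting the two factors containing it. -/
noncomputable def CR : OnePoint ℂ → OnePoint ℂ → OnePoint ℂ → OnePoint ℂ → ℂ
  | Option.none,    Option.some z₂, Option.some z₃, Option.some z₄ => (z₄ - z₂) / (z₃ - z₂)
  | Option.some z₁, Option.none,    Option.some z₃, Option.some z₄ => (z₃ - z₁) / (z₄ - z₁)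
  | Option.some z₁, Option.some z₂, Option.none,    Option.some z₄ => (z₄ - z₂) / (z₄ - z₁)
  | Option.some z₁, Option.some z₂, Option.some z₃, Option.none    => (z₃ - z₁) / (z₃ - z₂)
  | Option.some z₁, Option.some z₂, Option.some z₃, Option.some z₄ =>
      ((z₃ - z₁) * (z₄ - z₂)) / ((z₃ - z₂) * (z₄ - z₁))
  | _, _, _, _ => 0


private lemma quad_factor {A B C t1 t2 t : ℂ} (hA : A ≠ 0)
    (h1 : B = A*(t1+t2)) (h2 : C = A*(t1*t2)) :
    A*t^2 - B*t + C = 0 ↔ t = t1 ∨ t = t2 := by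
  subst h1; subst h2
  constructor
  · intro h
    have h' : A*((t-t1)*(t-t2)) = 0 := by linear_combination h
    rcases mul_eq_zero.1 h' with h'' | h''
    · exact absurd h'' hA
    · rcases mul_eq_zero.1 h'' with h3 | h3
      · exact Or.inl (sub_eq_zero.1 h3)
      · exact Or.inr (sub_eq_zero.1 h3)
  · rintro (rfl | rfl) <;> ring

private def Qv {R : Type*} [CommRing R] (A B C g0 g1 g2 : R) : R :=
  (g2*B+g1*A)^2*C + (g2*B+g1*A)*(g0*A-g2*C)*B + (g0*A-g2*C)^2*A

private lemma sym_val {A B C t1 t2 g0 g1 g2 : ℂ}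
    (h1 : B = A*(t1+t2)) (h2 : C = A*(t1*t2)) :
    Qv A B C g0 g1 g2 = A^3 * ((g2*t1^2+g1*t1+g0) * (g2*t2^2+g1*t2+g0)) := by
  subst h1; subst h2; unfold Qv; ring

private lemma roots_of_sqrt {A B C d : ℂ} (hA : A ≠ 0) (hd : d^2 = B^2 - 4*A*C) :
    B = A*((B+d)/(2*A) + (B-d)/(2*A)) ∧ C = A*(((B+d)/(2*A)) * ((B-d)/(2*A))) := by
  constructor
  · field_simp; ring
  · field_simp; linear_combination hd

private lemma roots_ne {A B d : ℂ} (hA : A ≠ 0) (hd : d ≠ 0) :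
    (B+d)/(2*A) ≠ (B-d)/(2*A) := by
  intro h
  rw [div_eq_div_iff (by simpa using hA) (by simpa using hA)] at h
  apply hd
  have h2A : (2:ℂ)*A ≠ 0 := by simpa using hA
  field_simp at h
  linear_combination h/2

private lemma t_facts {a0 a1 a3 t : ℂ} (h00 : a0 ≠ 0) (h01 : a0 ≠ 1)
    (h10 : a1 ≠ 0) (h11 : a1 ≠ 1) (h30 : a3 ≠ 0) (h31 : a3 ≠ 1)
    (hf : a3*(a0-t)*(a1*t-1) = (a0-1)*(a1-1)*t) :
    t ≠ 0 ∧ t ≠ 1 ∧ t ≠ a0 ∧ a1*t ≠ 1 ∧ a1*t ≠ a0 ∧ a1*t ≠ t := by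
  have ht0 : t ≠ 0 := by
    rintro rfl
    have h : a3*a0 = 0 := by linear_combination -hf
    rcases mul_eq_zero.1 h with h | h
    exacts [h30 h, h00 h]
  have ht1 : t ≠ 1 := by
    rintro rfl
    have h : (a0-1)*((a1-1)*(a3-1)) = 0 := by linear_combination hf
    rcases mul_eq_zero.1 h with h | h
    · exact h01 (sub_eq_zero.1 h)
    · rcases mul_eq_zero.1 h with h | h
      · exact h11 (sub_eq_zero.1 h)
      · exact h31 (sub_eq_zero.1 h)
  have hta : t ≠ a0 := by
    intro h; subst h
    have h : (t-1)*((a1-1)*t) = 0 := by linear_combination -hf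
    rcases mul_eq_zero.1 h with h | h
    · exact ht1 (sub_eq_zero.1 h)
    · rcases mul_eq_zero.1 h with h | h
      · exact h11 (sub_eq_zero.1 h)
      · exact ht0 h
  have h1t1 : a1*t ≠ 1 := by
    intro h
    have h' : (a0-1)*((a1-1)*t) = 0 := by linear_combination -hf + (a3*(a0-t))*h
    rcases mul_eq_zero.1 h' with h' | h'
    · exact h01 (sub_eq_zero.1 h')
    · rcases mul_eq_zero.1 h' with h' | h'
      · exact h11 (sub_eq_zero.1 h')
      · exact ht0 h'
  have h1ta : a1*t ≠ a0 := by
    intro h; subst h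
    have h : (a1*t-1)*((a1-1)*(t*(a3-1))) = 0 := by linear_combination hf
    rcases mul_eq_zero.1 h with h | h
    · exact h1t1 (sub_eq_zero.1 h)
    · rcases mul_eq_zero.1 h with h | h
      · exact h11 (sub_eq_zero.1 h)
      · rcases mul_eq_zero.1 h with h | h
        · exact ht0 h
        · exact h31 (sub_eq_zero.1 h)
  refine ⟨ht0, ht1, hta, h1t1, h1ta, ?_⟩
  intro h
  have h' : (a1-1)*t = 0 := by linear_combination h
  rcases mul_eq_zero.1 h' with h' | h'
  · exact h11 (sub_eq_zero.1 h')
  · exact ht0 h'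

private lemma u_facts {a0 a1 a2 a4 t u : ℂ}
    (h20 : a2 ≠ 0) (h21 : a2 ≠ 1) (h40 : a4 ≠ 0) (h41 : a4 ≠ 1)
    (ht0 : t ≠ 0) (ht1 : t ≠ 1)
    (hg : a4*(u-t)*(a2*u-1) = (u-1)*(a2*u-t))
    (hk2 : a4*(a0-t)*(a2*a0-1) - (a0-1)*(a2*a0-t) ≠ 0)
    (hk3 : a4*(a1-1)*t*(a1*a2*t-1) - (a1*t-1)*t*(a1*a2-1) ≠ 0)
    (hk4 : a4*(a0-a2*t)*(a0-1) - (a0-a2)*(a0-t) ≠ 0)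
    (hk5 : a4*t*(a1-a2)*(a1*t-1) - (a1*t-a2)*t*(a1-1) ≠ 0) :
    u ≠ 0 ∧ u ≠ 1 ∧ u ≠ t ∧ u ≠ a0 ∧ u ≠ a1*t ∧
    a2*u ≠ 1 ∧ a2*u ≠ t ∧ a2*u ≠ a0 ∧ a2*u ≠ a1*t ∧ a2*u ≠ u := by
  have hu0 : u ≠ 0 := by
    rintro rfl
    have h : t*(a4-1) = 0 := by linear_combination hg
    rcases mul_eq_zero.1 h with h | h
    · exact ht0 h
    · exact h41 (sub_eq_zero.1 h)
  have hu1 : u ≠ 1 := by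
    rintro rfl
    have h : a4*((1-t)*(a2-1)) = 0 := by linear_combination hg
    rcases mul_eq_zero.1 h with h | h
    · exact h40 h
    · rcases mul_eq_zero.1 h with h | h
      · exact ht1 (sub_eq_zero.1 h).symm
      · exact h21 (sub_eq_zero.1 h)
  have hut : u ≠ t := by
    intro h; subst h
    have h : (u-1)*(u*(a2-1)) = 0 := by linear_combination -hg
    rcases mul_eq_zero.1 h with h | h
    · exact hu1 (sub_eq_zero.1 h)
    · rcases mul_eq_zero.1 h with h | h
      · exact hu0 h
      · exact h21 (sub_eq_zero.1 h)
  have hua : u ≠ a0 := by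
    intro h; subst h
    exact hk2 (by linear_combination hg)
  have hu1t : u ≠ a1*t := by
    intro h; subst h
    exact hk3 (by linear_combination hg)
  have h2u1 : a2*u ≠ 1 := by
    intro h
    have h' : (u-1)*(1-t) = 0 := by linear_combination -hg + (a4*(u-t) - (u-1))*h
    rcases mul_eq_zero.1 h' with h' | h'
    · exact hu1 (sub_eq_zero.1 h')
    · exact ht1 (sub_eq_zero.1 h').symm
  have h2ut : a2*u ≠ t := by
    intro h
    have h' : a4*((u-t)*(t-1)) = 0 := by linear_combination hg + ((u-1) - a4*(u-t))*h
    rcases mul_eq_zero.1 h' with h' | h'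
    · exact h40 h'
    · rcases mul_eq_zero.1 h' with h' | h'
      · exact hut (sub_eq_zero.1 h')
      · exact ht1 (sub_eq_zero.1 h')
  have h2ua : a2*u ≠ a0 := by
    intro h
    exact hk4 (by linear_combination a2*hg + (a0 - a0*a4 + a2*a4*t - a2*a4*u + a2*u - a2 + a4 - t)*h)
  have h2u1t : a2*u ≠ a1*t := by
    intro h
    exact hk5 (by linear_combination a2*hg + (a1*t - a1*a4*t + a2*a4*t - a2*a4*u + a2*u - a2 + a4 - t)*h)
  have h2uu : a2*u ≠ u := by
    intro h
    have h' : (a2-1)*u = 0 := by linear_combination h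
    rcases mul_eq_zero.1 h' with h' | h'
    · exact h21 (sub_eq_zero.1 h')
    · exact hu0 h'
  exact ⟨hu0, hu1, hut, hua, hu1t, h2u1, h2ut, h2ua, h2u1t, h2uu⟩

private lemma u_level {a2 a4 t : ℂ} (hA' : a2*(a4-1) ≠ 0)
    (hDu : (a4*(1+a2*t)-(t+a2))^2 - 4*(a2*(a4-1))*((a4-1)*t) ≠ 0) :
    ∃ u1 u2 : ℂ, u1 ≠ u2 ∧
      ∀ u : ℂ, (a4*(u-t)*(a2*u-1) = (u-1)*(a2*u-t)) ↔ (u = u1 ∨ u = u2) := by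
  obtain ⟨d, hd⟩ := IsAlgClosed.exists_pow_nat_eq
    ((a4*(1+a2*t)-(t+a2))^2 - 4*(a2*(a4-1))*((a4-1)*t)) (n := 2) two_pos
  obtain ⟨hsB, hsC⟩ := roots_of_sqrt hA' hd
  have hd0 : d ≠ 0 := by rintro rfl; exact hDu (by simpa using hd.symm)
  refine ⟨(a4*(1+a2*t)-(t+a2)+d)/(2*(a2*(a4-1))), (a4*(1+a2*t)-(t+a2)-d)/(2*(a2*(a4-1))),
    roots_ne hA' hd0, fun u => ?_⟩
  rw [← quad_factor hA' hsB hsC]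
  constructor <;> intro h <;> linear_combination h

private lemma key {a0 a1 a2 a3 a4 : ℂ}
    (h00 : a0 ≠ 0) (h01 : a0 ≠ 1) (h10 : a1 ≠ 0) (h11 : a1 ≠ 1)
    (h20 : a2 ≠ 0) (h21 : a2 ≠ 1) (h30 : a3 ≠ 0) (h31 : a3 ≠ 1)
    (h40 : a4 ≠ 0) (h41 : a4 ≠ 1)
    (hD : (a0*a1*a3 + a3 - (a0-1)*(a1-1))^2 - 4*(a1*a3)*(a0*a3) ≠ 0)
    (hQ1 : Qv (a1*a3) (a0*a1*a3 + a3 - (a0-1)*(a1-1)) (a0*a3)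
      ((a4-a2)^2) (2*(a4-a2)*(a2*a4-1) - 4*a2*(a4-1)^2) ((a2*a4-1)^2) ≠ 0)
    (hQ2 : Qv (a1*a3) (a0*a1*a3 + a3 - (a0-1)*(a1-1)) (a0*a3)
      (a4*a0*(a2*a0-1) - (a0-1)*(a2*a0)) ((a0-1) - a4*(a2*a0-1)) 0 ≠ 0)
    (hQ3 : Qv (a1*a3) (a0*a1*a3 + a3 - (a0-1)*(a1-1)) (a0*a3)
      0 ((a1*a2-1) - a4*(a1-1)) (a4*(a1-1)*a1*a2 - a1*(a1*a2-1)) ≠ 0)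
    (hQ4 : Qv (a1*a3) (a0*a1*a3 + a3 - (a0-1)*(a1-1)) (a0*a3)
      (a4*a0*(a0-1) - (a0-a2)*a0) ((a0-a2) - a4*a2*(a0-1)) 0 ≠ 0)
    (hQ5 : Qv (a1*a3) (a0*a1*a3 + a3 - (a0-1)*(a1-1)) (a0*a3)
      0 (a2*(a1-1) - a4*(a1-a2)) (a4*(a1-a2)*a1 - a1*(a1-1)) ≠ 0) :
    ∃ t1 t2 u11 u12 u21 u22 : ℂ, t1 ≠ t2 ∧ u11 ≠ u12 ∧ u21 ≠ u22 ∧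
      (∀ t u : ℂ,
        (a3*(a0-t)*(a1*t-1) = (a0-1)*(a1-1)*t ∧ a4*(u-t)*(a2*u-1) = (u-1)*(a2*u-t)) ↔
        ((t = t1 ∧ u = u11) ∨ (t = t1 ∧ u = u12) ∨ (t = t2 ∧ u = u21) ∨ (t = t2 ∧ u = u22))) ∧
      (∀ t u : ℂ,
        a3*(a0-t)*(a1*t-1) = (a0-1)*(a1-1)*t → a4*(u-t)*(a2*u-1) = (u-1)*(a2*u-t) →
        (t ≠ 0 ∧ t ≠ 1 ∧ t ≠ a0 ∧ a1*t ≠ 1 ∧ a1*t ≠ a0 ∧ a1*t ≠ t ∧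
         u ≠ 0 ∧ u ≠ 1 ∧ u ≠ t ∧ u ≠ a0 ∧ u ≠ a1*t ∧
         a2*u ≠ 1 ∧ a2*u ≠ t ∧ a2*u ≠ a0 ∧ a2*u ≠ a1*t ∧ a2*u ≠ u)) := by
  have hA : a1*a3 ≠ 0 := mul_ne_zero h10 h30
  have hA' : a2*(a4-1) ≠ 0 := mul_ne_zero h20 (sub_ne_zero.2 h41)
  obtain ⟨d, hd⟩ := IsAlgClosed.exists_pow_nat_eq
    ((a0*a1*a3 + a3 - (a0-1)*(a1-1))^2 - 4*(a1*a3)*(a0*a3)) (n := 2) two_pos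
  obtain ⟨hsB, hsC⟩ := roots_of_sqrt hA hd
  have hd0 : d ≠ 0 := by rintro rfl; exact hD (by simpa using hd.symm)
  set t1 := ((a0*a1*a3 + a3 - (a0-1)*(a1-1)) + d)/(2*(a1*a3)) with ht1def
  set t2 := ((a0*a1*a3 + a3 - (a0-1)*(a1-1)) - d)/(2*(a1*a3)) with ht2def
  have ht12 : t1 ≠ t2 := roots_ne hA hd0
  have hroott : ∀ t : ℂ, (a3*(a0-t)*(a1*t-1) = (a0-1)*(a1-1)*t) ↔ (t = t1 ∨ t = t2) := by
    intro t
    rw [← quad_factor hA hsB hsC]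
    constructor <;> intro h <;> linear_combination -h
  have hf1 : a3*(a0-t1)*(a1*t1-1) = (a0-1)*(a1-1)*t1 := (hroott t1).2 (Or.inl rfl)
  have hf2 : a3*(a0-t2)*(a1*t2-1) = (a0-1)*(a1-1)*t2 := (hroott t2).2 (Or.inr rfl)
  obtain ⟨ht10, ht11, ht1a, h1t11, h1t1a, h1t1t⟩ := t_facts h00 h01 h10 h11 h30 h31 hf1
  obtain ⟨ht20, ht21, ht2a, h1t21, h1t2a, h1t2t⟩ := t_facts h00 h01 h10 h11 h30 h31 hf2
  -- discriminant values at t1, t2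
  rw [sym_val hsB hsC] at hQ1 hQ2 hQ3 hQ4 hQ5
  have split : ∀ x y z : ℂ, x^3 * (y * z) ≠ 0 → y ≠ 0 ∧ z ≠ 0 := by
    intro x y z h
    constructor <;> intro h' <;> apply h <;> rw [h'] <;> ring
  obtain ⟨hG11, hG12⟩ := split _ _ _ hQ1
  obtain ⟨hG21, hG22⟩ := split _ _ _ hQ2
  obtain ⟨hG31, hG32⟩ := split _ _ _ hQ3
  obtain ⟨hG41, hG42⟩ := split _ _ _ hQ4
  obtain ⟨hG51, hG52⟩ := split _ _ _ hQ5
  have hDu1 : (a4*(1+a2*t1)-(t1+a2))^2 - 4*(a2*(a4-1))*((a4-1)*t1) ≠ 0 := by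
    intro h; exact hG11 (by linear_combination h)
  have hDu2 : (a4*(1+a2*t2)-(t2+a2))^2 - 4*(a2*(a4-1))*((a4-1)*t2) ≠ 0 := by
    intro h; exact hG12 (by linear_combination h)
  obtain ⟨u11, u12, hu112, hrootu1⟩ := u_level hA' hDu1
  obtain ⟨u21, u22, hu212, hrootu2⟩ := u_level hA' hDu2
  have hk21 : a4*(a0-t1)*(a2*a0-1) - (a0-1)*(a2*a0-t1) ≠ 0 := by
    intro h; exact hG21 (by linear_combination h)
  have hk22 : a4*(a0-t2)*(a2*a0-1) - (a0-1)*(a2*a0-t2) ≠ 0 := by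
    intro h; exact hG22 (by linear_combination h)
  have hk31 : a4*(a1-1)*t1*(a1*a2*t1-1) - (a1*t1-1)*t1*(a1*a2-1) ≠ 0 := by
    intro h; exact hG31 (by linear_combination h)
  have hk32 : a4*(a1-1)*t2*(a1*a2*t2-1) - (a1*t2-1)*t2*(a1*a2-1) ≠ 0 := by
    intro h; exact hG32 (by linear_combination h)
  have hk41 : a4*(a0-a2*t1)*(a0-1) - (a0-a2)*(a0-t1) ≠ 0 := by
    intro h; exact hG41 (by linear_combination h)
  have hk42 : a4*(a0-a2*t2)*(a0-1) - (a0-a2)*(a0-t2) ≠ 0 := by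
    intro h; exact hG42 (by linear_combination h)
  have hk51 : a4*t1*(a1-a2)*(a1*t1-1) - (a1*t1-a2)*t1*(a1-1) ≠ 0 := by
    intro h; exact hG51 (by linear_combination h)
  have hk52 : a4*t2*(a1-a2)*(a1*t2-1) - (a1*t2-a2)*t2*(a1-1) ≠ 0 := by
    intro h; exact hG52 (by linear_combination h)
  refine ⟨t1, t2, u11, u12, u21, u22, ht12, hu112, hu212, ?_, ?_⟩
  · intro t u
    constructor
    · rintro ⟨he1, he2⟩
      rcases (hroott t).1 he1 with rfl | rfl
      · rcases (hrootu1 u).1 he2 with rfl | rfl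
        · exact Or.inl ⟨rfl, rfl⟩
        · exact Or.inr (Or.inl ⟨rfl, rfl⟩)
      · rcases (hrootu2 u).1 he2 with rfl | rfl
        · exact Or.inr (Or.inr (Or.inl ⟨rfl, rfl⟩))
        · exact Or.inr (Or.inr (Or.inr ⟨rfl, rfl⟩))
    · rintro (⟨rfl, rfl⟩ | ⟨rfl, rfl⟩ | ⟨rfl, rfl⟩ | ⟨rfl, rfl⟩)
      · exact ⟨hf1, (hrootu1 _).2 (Or.inl rfl)⟩
      · exact ⟨hf1, (hrootu1 _).2 (Or.inr rfl)⟩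
      · exact ⟨hf2, (hrootu2 _).2 (Or.inl rfl)⟩
      · exact ⟨hf2, (hrootu2 _).2 (Or.inr rfl)⟩
  · intro t u he1 he2
    rcases (hroott t).1 he1 with rfl | rfl
    · obtain ⟨x1,x2,x3,x4,x5,x6,x7,x8,x9,x10⟩ :=
        u_facts h20 h21 h40 h41 ht10 ht11 he2 hk21 hk31 hk41 hk51
      exact ⟨ht10, ht11, ht1a, h1t11, h1t1a, h1t1t, x1,x2,x3,x4,x5,x6,x7,x8,x9,x10⟩
    · obtain ⟨x1,x2,x3,x4,x5,x6,x7,x8,x9,x10⟩ :=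
        u_facts h20 h21 h40 h41 ht20 ht21 he2 hk22 hk32 hk42 hk52
      exact ⟨ht20, ht21, ht2a, h1t21, h1t2a, h1t2t, x1,x2,x3,x4,x5,x6,x7,x8,x9,x10⟩

open MvPolynomial in
private noncomputable def qq : MvPolynomial (Fin 5) ℂ :=
  ((X 0*X 1*X 3 + X 3 - (X 0-1)*(X 1-1))^2 - 4*(X 1*X 3)*(X 0*X 3)) *
  (Qv (X 1*X 3) (X 0*X 1*X 3 + X 3 - (X 0-1)*(X 1-1)) (X 0*X 3)
      ((X 4-X 2)^2) (2*(X 4-X 2)*(X 2*X 4-1) - 4*X 2*(X 4-1)^2) ((X 2*X 4-1)^2) *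
  (Qv (X 1*X 3) (X 0*X 1*X 3 + X 3 - (X 0-1)*(X 1-1)) (X 0*X 3)
      (X 4*X 0*(X 2*X 0-1) - (X 0-1)*(X 2*X 0)) ((X 0-1) - X 4*(X 2*X 0-1)) 0 *
  (Qv (X 1*X 3) (X 0*X 1*X 3 + X 3 - (X 0-1)*(X 1-1)) (X 0*X 3)
      0 ((X 1*X 2-1) - X 4*(X 1-1)) (X 4*(X 1-1)*X 1*X 2 - X 1*(X 1*X 2-1)) *
  (Qv (X 1*X 3) (X 0*X 1*X 3 + X 3 - (X 0-1)*(X 1-1)) (X 0*X 3)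
      (X 4*X 0*(X 0-1) - (X 0-X 2)*X 0) ((X 0-X 2) - X 4*X 2*(X 0-1)) 0 *
  (Qv (X 1*X 3) (X 0*X 1*X 3 + X 3 - (X 0-1)*(X 1-1)) (X 0*X 3)
      0 (X 2*(X 1-1) - X 4*(X 1-X 2)) (X 4*(X 1-X 2)*X 1 - X 1*(X 1-1)))))))

private lemma eval_qq (a : Fin 5 → ℂ) :
    MvPolynomial.eval a qq =
      ((a 0*a 1*a 3 + a 3 - (a 0-1)*(a 1-1))^2 - 4*(a 1*a 3)*(a 0*a 3)) *
      (Qv (a 1*a 3) (a 0*a 1*a 3 + a 3 - (a 0-1)*(a 1-1)) (a 0*a 3)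
        ((a 4-a 2)^2) (2*(a 4-a 2)*(a 2*a 4-1) - 4*a 2*(a 4-1)^2) ((a 2*a 4-1)^2) *
      (Qv (a 1*a 3) (a 0*a 1*a 3 + a 3 - (a 0-1)*(a 1-1)) (a 0*a 3)
        (a 4*a 0*(a 2*a 0-1) - (a 0-1)*(a 2*a 0)) ((a 0-1) - a 4*(a 2*a 0-1)) 0 *
      (Qv (a 1*a 3) (a 0*a 1*a 3 + a 3 - (a 0-1)*(a 1-1)) (a 0*a 3)
        0 ((a 1*a 2-1) - a 4*(a 1-1)) (a 4*(a 1-1)*a 1*a 2 - a 1*(a 1*a 2-1)) *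
      (Qv (a 1*a 3) (a 0*a 1*a 3 + a 3 - (a 0-1)*(a 1-1)) (a 0*a 3)
        (a 4*a 0*(a 0-1) - (a 0-a 2)*a 0) ((a 0-a 2) - a 4*a 2*(a 0-1)) 0 *
      (Qv (a 1*a 3) (a 0*a 1*a 3 + a 3 - (a 0-1)*(a 1-1)) (a 0*a 3)
        0 (a 2*(a 1-1) - a 4*(a 1-a 2)) (a 4*(a 1-a 2)*a 1 - a 1*(a 1-1))))))) := by
  simp only [qq, Qv, map_mul, map_add, map_sub, map_pow, map_one, map_ofNat, map_zero,
    MvPolynomial.eval_X]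

set_option maxHeartbeats 1600000 in
private lemma qq_ne_zero : qq ≠ 0 := by
  intro h
  have h2 := congrArg (MvPolynomial.eval (![2,3,5,7,11] : Fin 5 → ℂ)) h
  rw [eval_qq, map_zero] at h2
  simp only [Matrix.cons_val_zero, Matrix.cons_val_one, Matrix.head_cons, Matrix.cons_val_two,
    Matrix.tail_cons, Matrix.cons_val_three, Matrix.cons_val_four] at h2
  norm_num [Qv] at h2


private lemma CR_inf (x y z : ℂ) :
    CR ∞ (x : OnePoint ℂ) (y : OnePoint ℂ) (z : OnePoint ℂ) = (z-x)/(y-x) := rfl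

private lemma CR_fin (w x y z : ℂ) :
    CR (w : OnePoint ℂ) (x : OnePoint ℂ) (y : OnePoint ℂ) (z : OnePoint ℂ)
      = ((y-w)*(z-x))/((y-x)*(z-w)) := rfl

private lemma toCoe {x : OnePoint ℂ} (h : x ≠ ∞) : ∃ z : ℂ, x = (z : OnePoint ℂ) := by
  rcases x with _ | z
  · exact absurd rfl h
  · exact ⟨z, rfl⟩

private lemma inj8 {b1 b2 b3 b4 b5 b6 b7 : ℂ}
    (h12 : b1 ≠ b2) (h13 : b1 ≠ b3) (h14 : b1 ≠ b4) (h15 : b1 ≠ b5) (h16 : b1 ≠ b6) (h17 : b1 ≠ b7)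
    (h23 : b2 ≠ b3) (h24 : b2 ≠ b4) (h25 : b2 ≠ b5) (h26 : b2 ≠ b6) (h27 : b2 ≠ b7)
    (h34 : b3 ≠ b4) (h35 : b3 ≠ b5) (h36 : b3 ≠ b6) (h37 : b3 ≠ b7)
    (h45 : b4 ≠ b5) (h46 : b4 ≠ b6) (h47 : b4 ≠ b7)
    (h56 : b5 ≠ b6) (h57 : b5 ≠ b7)
    (h67 : b6 ≠ b7) :
    Function.Injective (![∞, (b1 : OnePoint ℂ), b2, b3, b4, b5, b6, b7] : Fin 8 → OnePoint ℂ) := by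
  intro i j hij
  fin_cases i <;> fin_cases j <;>
    first
    | rfl
    | exact absurd (OnePoint.coe_eq_coe.mp hij) (by assumption)
    | exact absurd (OnePoint.coe_eq_coe.mp hij).symm (by assumption)
    | exact absurd hij (OnePoint.infty_ne_coe _)
    | exact absurd hij (OnePoint.coe_ne_infty _)


private noncomputable def Ptup (a : Fin 5 → ℂ) (t u : ℂ) : Fin 8 → OnePoint ℂ :=
  ![∞, ((0:ℂ) : OnePoint ℂ), ((1:ℂ) : OnePoint ℂ), (t : OnePoint ℂ),
    ((a 0 : ℂ) : OnePoint ℂ), ((a 1 * t : ℂ) : OnePoint ℂ),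
    (u : OnePoint ℂ), ((a 2 * u : ℂ) : OnePoint ℂ)]

theorem crossRatioDegree_eq_four_T4 :
    ∃ q : MvPolynomial (Fin 5) ℂ, q ≠ 0 ∧
      ∀ a : Fin 5 → ℂ, (∀ i, a i ≠ 0 ∧ a i ≠ 1) → MvPolynomial.eval a q ≠ 0 →
        let S : Set (Fin 8 → OnePoint ℂ) :=
          {p | Function.Injective p ∧ p 0 = ∞ ∧ p 1 = ((0 : ℂ) : OnePoint ℂ) ∧
            p 2 = ((1 : ℂ) : OnePoint ℂ) ∧
            CR (p 0) (p 1) (p 2) (p 4) = a 0 ∧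
            CR (p 0) (p 1) (p 3) (p 5) = a 1 ∧
            CR (p 0) (p 1) (p 6) (p 7) = a 2 ∧
            CR (p 2) (p 3) (p 4) (p 5) = a 3 ∧
            CR (p 2) (p 3) (p 6) (p 7) = a 4}
        S.Finite ∧ S.ncard = 4 := by
  refine ⟨qq, qq_ne_zero, ?_⟩
  intro a ha hq
  obtain ⟨h00, h01⟩ := ha 0
  obtain ⟨h10, h11⟩ := ha 1
  obtain ⟨h20, h21⟩ := ha 2
  obtain ⟨h30, h31⟩ := ha 3
  obtain ⟨h40, h41⟩ := ha 4
  rw [eval_qq] at hq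
  obtain ⟨hD, hq⟩ := mul_ne_zero_iff.1 hq
  obtain ⟨hQ1, hq⟩ := mul_ne_zero_iff.1 hq
  obtain ⟨hQ2, hq⟩ := mul_ne_zero_iff.1 hq
  obtain ⟨hQ3, hq⟩ := mul_ne_zero_iff.1 hq
  obtain ⟨hQ4, hQ5⟩ := mul_ne_zero_iff.1 hq
  obtain ⟨t1, t2, u11, u12, u21, u22, ht12, hu112, hu212, hiff, hfacts⟩ :=
    key h00 h01 h10 h11 h20 h21 h30 h31 h40 h41 hD hQ1 hQ2 hQ3 hQ4 hQ5
  intro S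
  have hmem : ∀ t u : ℂ,
      a 3*(a 0-t)*(a 1*t-1) = (a 0-1)*(a 1-1)*t →
      a 4*(u-t)*(a 2*u-1) = (u-1)*(a 2*u-t) →
      Ptup a t u ∈ S := by
    intro t u he1 he2
    obtain ⟨ht0, ht1, hta, h1t1, h1ta, h1tt, hu0, hu1, hut, hua, hu1t,
      h2u1, h2ut, h2ua, h2u1t, h2uu⟩ := hfacts t u he1 he2
    refine ⟨?_, rfl, rfl, rfl, ?_, ?_, ?_, ?_, ?_⟩
    · exact inj8 zero_ne_one (Ne.symm ht0) (Ne.symm h00) (Ne.symm (mul_ne_zero h10 ht0))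
        (Ne.symm hu0) (Ne.symm (mul_ne_zero h20 hu0))
        (Ne.symm ht1) (Ne.symm h01) (Ne.symm h1t1) (Ne.symm hu1) (Ne.symm h2u1)
        hta (Ne.symm h1tt) (Ne.symm hut) (Ne.symm h2ut)
        (Ne.symm h1ta) (Ne.symm hua) (Ne.symm h2ua)
        (Ne.symm hu1t) (Ne.symm h2u1t)
        (Ne.symm h2uu)
    · show CR ∞ ((0:ℂ) : OnePoint ℂ) ((1:ℂ) : OnePoint ℂ) ((a 0 : ℂ) : OnePoint ℂ) = a 0
      rw [CR_inf]; simp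
    · show CR ∞ ((0:ℂ) : OnePoint ℂ) ((t:ℂ) : OnePoint ℂ) ((a 1 * t : ℂ) : OnePoint ℂ) = a 1
      rw [CR_inf, sub_zero, sub_zero, div_eq_iff ht0]
    · show CR ∞ ((0:ℂ) : OnePoint ℂ) ((u:ℂ) : OnePoint ℂ) ((a 2 * u : ℂ) : OnePoint ℂ) = a 2
      rw [CR_inf, sub_zero, sub_zero, div_eq_iff hu0]
    · show CR ((1:ℂ) : OnePoint ℂ) ((t:ℂ) : OnePoint ℂ) ((a 0 : ℂ) : OnePoint ℂ)
        ((a 1 * t : ℂ) : OnePoint ℂ) = a 3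
      rw [CR_fin, div_eq_iff (mul_ne_zero (sub_ne_zero.2 (Ne.symm hta)) (sub_ne_zero.2 h1t1))]
      linear_combination -he1
    · show CR ((1:ℂ) : OnePoint ℂ) ((t:ℂ) : OnePoint ℂ) ((u:ℂ) : OnePoint ℂ)
        ((a 2 * u : ℂ) : OnePoint ℂ) = a 4
      rw [CR_fin, div_eq_iff (mul_ne_zero (sub_ne_zero.2 hut) (sub_ne_zero.2 h2u1))]
      linear_combination -he2
  have hSet : S = {Ptup a t1 u11, Ptup a t1 u12, Ptup a t2 u21, Ptup a t2 u22} := by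
    apply Set.eq_of_subset_of_subset
    · rintro p ⟨hinj, hp0, hp1, hp2, hc1, hc2, hc3, hc4, hc5⟩
      obtain ⟨z3, hz3⟩ := toCoe (show p 3 ≠ ∞ from fun h =>
        absurd (hinj (h.trans hp0.symm)) (by decide))
      obtain ⟨z4, hz4⟩ := toCoe (show p 4 ≠ ∞ from fun h =>
        absurd (hinj (h.trans hp0.symm)) (by decide))
      obtain ⟨z5, hz5⟩ := toCoe (show p 5 ≠ ∞ from fun h =>
        absurd (hinj (h.trans hp0.symm)) (by decide))
      obtain ⟨z6, hz6⟩ := toCoe (show p 6 ≠ ∞ from fun h =>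
        absurd (hinj (h.trans hp0.symm)) (by decide))
      obtain ⟨z7, hz7⟩ := toCoe (show p 7 ≠ ∞ from fun h =>
        absurd (hinj (h.trans hp0.symm)) (by decide))
      have hz30 : z3 ≠ 0 := by
        intro h
        have : p 3 = p 1 := by rw [hz3, hp1, h]
        exact absurd (hinj this) (by decide)
      have hz60 : z6 ≠ 0 := by
        intro h
        have : p 6 = p 1 := by rw [hz6, hp1, h]
        exact absurd (hinj this) (by decide)
      have hd1 : z4 - z3 ≠ 0 := sub_ne_zero.2 (by
        intro h
        have : p 4 = p 3 := by rw [hz4, hz3, h]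
        exact absurd (hinj this) (by decide))
      have hd2 : z5 - 1 ≠ 0 := sub_ne_zero.2 (by
        intro h
        have : p 5 = p 2 := by rw [hz5, hp2, h]
        exact absurd (hinj this) (by decide))
      have hd3 : z6 - z3 ≠ 0 := sub_ne_zero.2 (by
        intro h
        have : p 6 = p 3 := by rw [hz6, hz3, h]
        exact absurd (hinj this) (by decide))
      have hd4 : z7 - 1 ≠ 0 := sub_ne_zero.2 (by
        intro h
        have : p 7 = p 2 := by rw [hz7, hp2, h]
        exact absurd (hinj this) (by decide))
      rw [hp0, hp1, hp2, hz4] at hc1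
      rw [hp0, hp1, hz3, hz5] at hc2
      rw [hp0, hp1, hz6, hz7] at hc3
      rw [hp2, hz3, hz4, hz5] at hc4
      rw [hp2, hz3, hz6, hz7] at hc5
      rw [CR_inf] at hc1 hc2 hc3
      rw [CR_fin] at hc4 hc5
      have hz4e : z4 = a 0 := by simpa using hc1
      rw [sub_zero, sub_zero, div_eq_iff hz30] at hc2
      rw [sub_zero, sub_zero, div_eq_iff hz60] at hc3
      rw [div_eq_iff (mul_ne_zero hd1 hd2)] at hc4
      rw [div_eq_iff (mul_ne_zero hd3 hd4)] at hc5
      subst hz4e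
      subst hc2
      subst hc3
      have he1 : a 3*(a 0-z3)*(a 1*z3-1) = (a 0-1)*(a 1-1)*z3 := by linear_combination -hc4
      have he2 : a 4*(z6-z3)*(a 2*z6-1) = (z6-1)*(a 2*z6-z3) := by linear_combination -hc5
      have hPeq : ∀ tv uv : ℂ, z3 = tv → z6 = uv → p = Ptup a tv uv := by
        intro tv uv htv huv
        funext i; fin_cases i
        · show p 0 = ∞; exact hp0
        · show p 1 = ((0:ℂ) : OnePoint ℂ); exact hp1
        · show p 2 = ((1:ℂ) : OnePoint ℂ); exact hp2
        · show p 3 = ((tv:ℂ) : OnePoint ℂ); rw [hz3, htv]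
        · show p 4 = ((a 0 : ℂ) : OnePoint ℂ); exact hz4
        · show p 5 = ((a 1 * tv : ℂ) : OnePoint ℂ); rw [hz5, htv]
        · show p 6 = ((uv:ℂ) : OnePoint ℂ); rw [hz6, huv]
        · show p 7 = ((a 2 * uv : ℂ) : OnePoint ℂ); rw [hz7, huv]
      rcases (hiff z3 z6).1 ⟨he1, he2⟩ with ⟨h1, h2⟩ | ⟨h1, h2⟩ | ⟨h1, h2⟩ | ⟨h1, h2⟩
      · exact Or.inl (hPeq _ _ h1 h2)
      · exact Or.inr (Or.inl (hPeq _ _ h1 h2))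
      · exact Or.inr (Or.inr (Or.inl (hPeq _ _ h1 h2)))
      · exact Or.inr (Or.inr (Or.inr (hPeq _ _ h1 h2)))
    · rintro p (rfl | rfl | rfl | rfl)
      · have hc := (hiff t1 u11).2 (Or.inl ⟨rfl, rfl⟩)
        exact hmem _ _ hc.1 hc.2
      · have hc := (hiff t1 u12).2 (Or.inr (Or.inl ⟨rfl, rfl⟩))
        exact hmem _ _ hc.1 hc.2
      · have hc := (hiff t2 u21).2 (Or.inr (Or.inr (Or.inl ⟨rfl, rfl⟩)))
        exact hmem _ _ hc.1 hc.2
      · have hc := (hiff t2 u22).2 (Or.inr (Or.inr (Or.inr ⟨rfl, rfl⟩)))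
        exact hmem _ _ hc.1 hc.2
  have ne12 : Ptup a t1 u11 ≠ Ptup a t1 u12 := fun h =>
    hu112 (OnePoint.coe_eq_coe.mp (congrFun h 6))
  have ne13 : Ptup a t1 u11 ≠ Ptup a t2 u21 := fun h =>
    ht12 (OnePoint.coe_eq_coe.mp (congrFun h 3))
  have ne14 : Ptup a t1 u11 ≠ Ptup a t2 u22 := fun h =>
    ht12 (OnePoint.coe_eq_coe.mp (congrFun h 3))
  have ne23 : Ptup a t1 u12 ≠ Ptup a t2 u21 := fun h =>
    ht12 (OnePoint.coe_eq_coe.mp (congrFun h 3))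
  have ne24 : Ptup a t1 u12 ≠ Ptup a t2 u22 := fun h =>
    ht12 (OnePoint.coe_eq_coe.mp (congrFun h 3))
  have ne34 : Ptup a t2 u21 ≠ Ptup a t2 u22 := fun h =>
    hu212 (OnePoint.coe_eq_coe.mp (congrFun h 6))
  constructor
  · rw [hSet]
    exact (((Set.finite_singleton _).insert _).insert _).insert _
  · rw [hSet]
    rw [Set.ncard_insert_of_notMem (by simp [ne12, ne13, ne14]),
      Set.ncard_insert_of_notMem (by simp [ne23, ne24]),
      Set.ncard_insert_of_notMem (by simp [ne34]),
      Set.ncard_singleton]
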